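/- Let s be a finite multiset of natural numbers, let g ∈ s, and let t be the multiset obtained from s by removing one copy of g and adding a finite multiset b of natural numbers, each element of which is strictly less than g. Then t is strictly smaller than s in the order obtained by comparing the non-increasing sorted lists of the multisets lexicographically (where a proper prefix is considered smaller than the longer list). -/

import Mathlib

/-- The elements of a finite multiset of naturals listed in non-increasing order. -/
def sortDesc (m : Multiset ℕ) : List ℕ := (Multiset.sort m (· ≤ ·)).reverse

/-- The complexity order on finite multisets of naturals: compare the
non-increasing sorted lists lexicographically, a proper prefix being smaller. -/
def MLT (m m' : Multiset ℕ) : Prop := List.Lex (· < ·) (sortDesc m) (sortDesc m')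

lemma sortDesc_sorted (m : Multiset ℕ) : List.Pairwise (· ≥ ·) (sortDesc m) := by
  have h := Multiset.pairwise_sort (s := m) (r := (· ≤ ·))
  rw [sortDesc, List.pairwise_reverse]
  exact h.imp (fun {a b} h => h)

lemma count_sortDesc (m : Multiset ℕ) (x : ℕ) :
    (sortDesc m).count x = m.count x := by
  rw [sortDesc, List.count_reverse]
  rw [← Multiset.coe_count, Multiset.sort_eq]

lemma lex_of_counts (N : ℕ) (l' : List ℕ) : ∀ l : List ℕ,
    List.Pairwise (· ≥ ·) l → List.Pairwise (· ≥ ·) l' →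
    (∀ j, N < j → l.count j = l'.count j) → l.count N < l'.count N →
    List.Lex (· < ·) l l' := by
  induction l' with
  | nil => intro l _ _ _ hN; simp at hN
  | cons a l'' ih =>
    intro l hl hl' hj hN
    match l with
    | [] => exact List.Lex.nil
    | c :: l₂ =>
      rcases lt_trichotomy c a with h | h | h
      · exact List.Lex.rel h
      · subst h
        refine List.Lex.cons ?_
        refine ih l₂ hl.of_cons hl'.of_cons ?_ ?_
        · intro j hjN
          have := hj j hjN
          simp only [List.count_cons] at this
          omega
        · simp only [List.count_cons] at hN
          omega
      · exfalso
        have hmem : ∀ x ∈ a :: l'', x ≤ a := by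
          intro x hx
          rcases List.mem_cons.mp hx with rfl | hx
          · exact le_refl x
          · exact List.rel_of_pairwise_cons hl' hx
        by_cases hc : N < c
        · have h1 : (c :: l₂).count c ≥ 1 := by simp [List.count_cons]
          have h2 : (a :: l'').count c = 0 := by
            rw [List.count_eq_zero]
            intro hmem'
            exact absurd (hmem c hmem') (by omega)
          have := hj c hc
          omega
        · have haN : a < N := by omega
          have h2 : (a :: l'').count N = 0 := by
            rw [List.count_eq_zero]
            intro hmem'
            exact absurd (hmem N hmem') (by omega)
          omega

theorem stmt_0 (s b : Multiset ℕ) (g : ℕ) (hg : g ∈ s)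
    (hb : ∀ x ∈ b, x < g) :
    MLT (s.erase g + b) s := by
  have hbcount : ∀ j, g ≤ j → b.count j = 0 := by
    intro j hj
    rw [Multiset.count_eq_zero]
    intro hmem
    exact absurd (hb j hmem) (by omega)
  refine lex_of_counts g (sortDesc s) _ (sortDesc_sorted _) (sortDesc_sorted _) ?_ ?_
  · intro j hj
    rw [count_sortDesc, count_sortDesc, Multiset.count_add,
      Multiset.count_erase_of_ne (by omega), hbcount j (le_of_lt hj), add_zero]
  · rw [count_sortDesc, count_sortDesc, Multiset.count_add,
      Multiset.count_erase_self, hbcount g le_rfl]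
    have := Multiset.count_pos.mpr hg
    omega
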